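/- The 3×5 weighing scheme with rows (0,0,1,0,2), (0,1,1,2,0), (1,1,1,0,0) is valid for 5 mints with 3 weighings, and its cost is 1+1+1+2+2 = 7. Hence C(3,5) ≤ 7. -/

import Mathlib

/-- Excess-weight vector of state `d` under scheme `C`. -/
def vvec {W M : ℕ} (C : Fin W → Fin M → ℕ) (d : Fin M → Bool) : Fin W → ℕ :=
  fun w => ∑ m, C w m * (if d m then 1 else 0)

/-- A scheme is valid when excess vectors of distinct states are never
positive rational multiples of each other. -/
def ValidScheme {W M : ℕ} (C : Fin W → Fin M → ℕ) : Prop :=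
  ∀ d d' : Fin M → Bool, d ≠ d' →
    ¬ ∃ q : ℚ, 0 < q ∧
      (fun w => (vvec C d' w : ℚ)) = q • (fun w => (vvec C d w : ℚ))

/-- Total number of coins needed: each mint supplies its column maximum. -/
def cost {W M : ℕ} (C : Fin W → Fin M → ℕ) : ℕ :=
  ∑ m, Finset.univ.sup fun w => C w m

lemma posmul_iff {W : ℕ} (a b : Fin W → ℕ) :
    (∃ q : ℚ, 0 < q ∧ (fun w => (b w : ℚ)) = q • (fun w => (a w : ℚ))) ↔
    ((∀ i, a i = 0) ∧ (∀ i, b i = 0)) ∨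
      ∃ i, a i ≠ 0 ∧ b i ≠ 0 ∧ ∀ j, b j * a i = b i * a j := by
  constructor
  · rintro ⟨q, hq, heq⟩
    have hpt : ∀ w, (b w : ℚ) = q * a w := fun w => congrFun heq w
    by_cases ha : ∀ i, a i = 0
    · left
      refine ⟨ha, fun i => ?_⟩
      have := hpt i
      rw [ha i] at this
      exact_mod_cast by simpa using this
    · right
      push_neg at ha
      obtain ⟨i, hi⟩ := ha
      have hai : (0:ℚ) < a i := by positivity
      have hbi : (b i : ℚ) = q * a i := hpt i
      have hbipos : (0:ℚ) < b i := by rw [hbi]; positivity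
      refine ⟨i, hi, by exact_mod_cast hbipos.ne', fun j => ?_⟩
      have : (b j : ℚ) * a i = (b i : ℚ) * a j := by
        rw [hpt j, hbi]; ring
      exact_mod_cast this
  · rintro (⟨ha, hb⟩ | ⟨i, hai, hbi, hcross⟩)
    · exact ⟨1, one_pos, by funext w; simp [ha w, hb w]⟩
    · have hai' : (0:ℚ) < a i := by positivity
      have hbi' : (0:ℚ) < b i := by positivity
      refine ⟨(b i : ℚ) / a i, by positivity, ?_⟩
      funext j
      have : (b j : ℚ) * a i = (b i : ℚ) * a j := by exact_mod_cast hcross j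
      rw [Pi.smul_apply, smul_eq_mul, div_mul_eq_mul_div, eq_div_iff hai'.ne']
      linarith [this]

theorem stmt_9 :
    ValidScheme ![![0, 0, 1, 0, 2], ![0, 1, 1, 2, 0], ![1, 1, 1, 0, 0]] ∧
    cost ![![0, 0, 1, 0, 2], ![0, 1, 1, 2, 0], ![1, 1, 1, 0, 0]] = 7 := by
  constructor
  · intro d d' hne h
    rw [posmul_iff] at h
    revert h hne
    revert d d'
    decide
  · decide
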